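/- Let X be an extremally disconnected space, Y a regular Hausdorff space, and φ : X → Set Y a perfect usco mapping. Then φ has a perfect selection, i.e. a selection f : X → Y that is continuous, a closed map, and has compact fibers f⁻¹(y) for every y ∈ Y. -/

import Mathlib

open Set Topology

/-- Projection to `X` of a closed subset of the graph of an usco map is closed. -/
lemma hasumi_proj_closed {X Y : Type*} [TopologicalSpace X] [TopologicalSpace Y]
    (φ : X → Set Y)
    (hcomp : ∀ x, IsCompact (φ x))
    (husc : ∀ U : Set Y, IsOpen U → IsOpen {x | φ x ⊆ U})
    {F : Set (X × Y)} (hF : IsClosed F) (hFG : ∀ p ∈ F, p.2 ∈ φ p.1) :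
    IsClosed (Prod.fst '' F) := by
  rw [← isOpen_compl_iff, isOpen_iff_mem_nhds]
  intro x hx
  have hsub : ({x} ×ˢ φ x) ⊆ Fᶜ := by
    rintro ⟨a, b⟩ ⟨ha, hb⟩ hab
    simp only [mem_singleton_iff] at ha
    exact hx ⟨(a, b), hab, ha⟩
  obtain ⟨u, v, hu, hv, hxu, hφv, huv⟩ :=
    generalized_tube_lemma isCompact_singleton (hcomp x) hF.isOpen_compl hsub
  have hN : IsOpen (u ∩ {x' | φ x' ⊆ v}) := hu.inter (husc v hv)
  refine Filter.mem_of_superset (hN.mem_nhds ⟨hxu rfl, hφv⟩) ?_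
  rintro x' ⟨hx'u, hx'v⟩ ⟨⟨a, b⟩, hab, rfl⟩
  exact huv (show (a, b) ∈ u ×ˢ v from ⟨hx'u, hx'v (hFG _ hab)⟩) hab

theorem perfect_usco_perfect_selection_of_extremallyDisconnected
    {X Y : Type*} [TopologicalSpace X] [T2Space X] [ExtremallyDisconnected X]
    [TopologicalSpace Y] [T2Space Y] [RegularSpace Y]
    (φ : X → Set Y)
    (hne : ∀ x, (φ x).Nonempty)
    (hcomp : ∀ x, IsCompact (φ x))
    (husc : ∀ U : Set Y, IsOpen U → IsOpen {x | φ x ⊆ U})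
    (himage_closed : ∀ S : Set X, IsClosed S → IsClosed (⋃ x ∈ S, φ x))
    (hfiber_compact : ∀ y : Y, IsCompact {x : X | y ∈ φ x}) :
    ∃ f : X → Y, Continuous f ∧ IsClosedMap f ∧ (∀ y : Y, IsCompact (f ⁻¹' {y})) ∧
      ∀ x, f x ∈ φ x := by
  classical
  -- the graph of φ
  set G : Set (X × Y) := {p | p.2 ∈ φ p.1} with hGdef
  have hGclosed : IsClosed G := by
    rw [← isOpen_compl_iff, isOpen_iff_mem_nhds]
    rintro ⟨x, y⟩ hxy
    have hd : Disjoint ({y} : Set Y) (φ x) := by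
      exact disjoint_singleton_left.mpr hxy
    obtain ⟨u, v, hu, hv, hyu, hφv, huv⟩ :=
      SeparatedNhds.of_isCompact_isCompact isCompact_singleton (hcomp x) hd
    have hN : IsOpen ({x' | φ x' ⊆ v} ×ˢ u) := (husc v hv).prod hu
    refine Filter.mem_of_superset (hN.mem_nhds ⟨hφv, hyu rfl⟩) ?_
    rintro ⟨a, b⟩ ⟨hav, hbu⟩ hG
    exact (huv.le_bot ⟨hbu, hav hG⟩ : False)
  -- the family for Zorn's lemma
  set S : Set (Set (X × Y)) :=
    {E | IsClosed E ∧ E ⊆ G ∧ ∀ x, (Prod.mk x ⁻¹' E).Nonempty} with hSdef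
  have hGS : G ∈ S := ⟨hGclosed, le_refl _, fun x => hne x⟩
  -- fibers of members of S are compact
  have hfibcomp : ∀ E ∈ S, ∀ x, IsCompact (Prod.mk x ⁻¹' E) := by
    intro E hE x
    exact (hcomp x).of_isClosed_subset (hE.1.preimage (Continuous.prodMk_right x))
      (fun y hy => hE.2.1 hy)
  -- Zorn
  have hzorn : ∀ c ⊆ S, IsChain (· ⊆ ·) c → c.Nonempty → ∃ lb ∈ S, ∀ s ∈ c, lb ⊆ s := by
    intro c hcS hchain hcne
    refine ⟨⋂₀ c, ⟨isClosed_sInter fun E hE => (hcS hE).1, ?_, ?_⟩,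
      fun s hs => sInter_subset_of_mem hs⟩
    · obtain ⟨E0, hE0⟩ := hcne
      exact (sInter_subset_of_mem hE0).trans (hcS hE0).2.1
    · intro x
      have : Nonempty c := hcne.to_subtype
      have key : (⋂ E : c, Prod.mk x ⁻¹' (E : Set (X × Y))).Nonempty := by
        apply IsCompact.nonempty_iInter_of_directed_nonempty_isCompact_isClosed
        · rintro ⟨E1, hE1⟩ ⟨E2, hE2⟩
          rcases hchain.total hE1 hE2 with h | h
          · exact ⟨⟨E1, hE1⟩, le_refl _, preimage_mono h⟩
          · exact ⟨⟨E2, hE2⟩, preimage_mono h, le_refl _⟩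
        · exact fun E => (hcS E.2).2.2 x
        · exact fun E => hfibcomp E (hcS E.2) x
        · exact fun E => (hcS E.2).1.preimage (Continuous.prodMk_right x)
      rwa [sInter_eq_iInter, preimage_iInter]
  obtain ⟨m, hmG, hmin⟩ := zorn_superset_nonempty S hzorn G hGS
  obtain ⟨hmclosed, hmsub, hmne⟩ := hmin.prop
  -- openness of "fiber inside U" sets
  have hWopen : ∀ U : Set Y, IsOpen U → IsOpen {x | Prod.mk x ⁻¹' m ⊆ U} := by
    intro U hU
    have : {x | Prod.mk x ⁻¹' m ⊆ U} = (Prod.fst '' (m ∩ Prod.snd ⁻¹' Uᶜ))ᶜ := by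
      ext x
      simp only [mem_compl_iff, mem_image, mem_inter_iff, mem_preimage, mem_setOf_eq]
      constructor
      · rintro h ⟨⟨a, b⟩, ⟨hab, hb⟩, rfl⟩
        exact hb (h hab)
      · intro h y hy
        by_contra hyU
        exact h ⟨(x, y), ⟨hy, hyU⟩, rfl⟩
    rw [this, isOpen_compl_iff]
    exact hasumi_proj_closed φ hcomp husc
      (hmclosed.inter (hU.isClosed_compl.preimage continuous_snd))
      (fun p hp => hmsub hp.1)
  -- closure claim: if the fiber at x0 meets an open V, then x0 is in the closure
  -- of the (open) set of points whose whole fiber lies in V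
  have hclW : ∀ (x0 : X) (V : Set Y) (y : Y), IsOpen V → (x0, y) ∈ m → y ∈ V →
      x0 ∈ closure {x | Prod.mk x ⁻¹' m ⊆ V} := by
    intro x0 V y hV hym hyV
    rw [mem_closure_iff]
    intro N hN hx0N
    set E' := m \ (N ×ˢ V) with hE'
    have hE'closed : IsClosed E' := hmclosed.sdiff (hN.prod hV)
    have : ¬ (E' ∈ S) := by
      intro hE'S
      have hsub' : m ⊆ E' := hmin.2 hE'S diff_subset
      exact (hsub' hym).2 ⟨hx0N, hyV⟩
    rw [hSdef] at this
    simp only [mem_setOf_eq, not_and, not_forall] at this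
    obtain ⟨x1, hx1⟩ := this hE'closed ((diff_subset).trans hmsub)
    rw [not_nonempty_iff_eq_empty] at hx1
    have hx1fib : ∀ z, (x1, z) ∈ m → x1 ∈ N ∧ z ∈ V := by
      intro z hz
      have : (x1, z) ∉ E' := by
        intro h
        have : z ∈ Prod.mk x1 ⁻¹' E' := h
        rw [hx1] at this
        exact this
      have hmem : (x1, z) ∈ N ×ˢ V := by
        by_contra hc
        exact this ⟨hz, hc⟩
      exact ⟨hmem.1, hmem.2⟩
    obtain ⟨z0, hz0⟩ := hmne x1
    refine ⟨x1, ⟨(hx1fib z0 hz0).1, ?_⟩⟩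
    intro z hz
    exact (hx1fib z hz).2
  -- the minimal set is single-valued
  have hsingle : ∀ x, (Prod.mk x ⁻¹' m).Subsingleton := by
    intro x0 y1 hy1 y2 hy2
    by_contra hne12
    obtain ⟨V1, V2, hV1, hV2, hyV1, hyV2, hVd⟩ := t2_separation hne12
    set W1 := {x | Prod.mk x ⁻¹' m ⊆ V1} with hW1
    set W2 := {x | Prod.mk x ⁻¹' m ⊆ V2} with hW2
    have hW1o : IsOpen W1 := hWopen V1 hV1
    have hW2o : IsOpen W2 := hWopen V2 hV2
    have hWd : W1 ∩ W2 = ∅ := by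
      ext x
      simp only [mem_inter_iff, mem_empty_iff_false, iff_false, not_and]
      intro h1 h2
      obtain ⟨z, hz⟩ := hmne x
      exact hVd.le_bot ⟨h1 hz, h2 hz⟩
    have hc1 : x0 ∈ closure W1 := hclW x0 V1 y1 hV1 hy1 hyV1
    have hc2 : x0 ∈ closure W2 := hclW x0 V2 y2 hV2 hy2 hyV2
    -- extremally disconnected: disjoint open sets have disjoint closures
    have hcl1open : IsOpen (closure W1) := ExtremallyDisconnected.open_closure W1 hW1o
    have h1 : closure W1 ∩ W2 = ∅ := by
      have := hW2o.inter_closure (t := W1)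
      rw [inter_comm W2 W1, hWd, closure_empty, subset_empty_iff] at this
      rw [inter_comm]
      exact this
    have h2 : closure W1 ∩ closure W2 = ∅ := by
      have := hcl1open.inter_closure (t := W2)
      rw [h1, closure_empty, subset_empty_iff] at this
      exact this
    have hx02 : x0 ∈ closure W1 ∩ closure W2 := ⟨hc1, hc2⟩
    rw [h2] at hx02
    exact hx02
  -- define the selection
  have hfib : ∀ x, ∃ y, Prod.mk x ⁻¹' m = {y} := by
    intro x
    obtain ⟨y, hy⟩ := hmne x
    exact ⟨y, (hsingle x).eq_singleton_of_mem hy⟩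
  choose f hf using hfib
  have hfmem : ∀ x, (x, f x) ∈ m := by
    intro x
    have : f x ∈ Prod.mk x ⁻¹' m := by rw [hf x]; exact rfl
    exact this
  have hfφ : ∀ x, f x ∈ φ x := fun x => hmsub (hfmem x)
  -- continuity
  have hfc : Continuous f := by
    rw [continuous_def]
    intro U hU
    have : f ⁻¹' U = {x | Prod.mk x ⁻¹' m ⊆ U} := by
      ext x
      simp only [mem_preimage, mem_setOf_eq, hf x, singleton_subset_iff]
    rw [this]
    exact hWopen U hU
  -- fibers are compact
  have hfibers : ∀ y : Y, IsCompact (f ⁻¹' {y}) := by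
    intro y
    apply (hfiber_compact y).of_isClosed_subset (isClosed_singleton.preimage hfc)
    intro x hx
    simp only [mem_preimage, mem_singleton_iff] at hx
    exact hx ▸ hfφ x
  -- closed map
  have hfclosed : IsClosedMap f := by
    intro Sc hSc
    apply isClosed_of_closure_subset
    intro y hy
    by_contra hyS
    have hP : IsCompact ({x | y ∈ φ x} ∩ Sc) := (hfiber_compact y).inter_right hSc
    have hC : IsCompact (f '' ({x | y ∈ φ x} ∩ Sc)) := hP.image hfc
    have hyC : y ∉ f '' ({x | y ∈ φ x} ∩ Sc) := by
      rintro ⟨x, hx, hfx⟩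
      exact hyS ⟨x, hx.2, hfx⟩
    obtain ⟨V, W, hV, hW, hyV, hCW, hVW⟩ :=
      SeparatedNhds.of_isCompact_isCompact isCompact_singleton hC
        (disjoint_singleton_left.mpr hyC)
    have hclVC : Disjoint (closure V) (f '' ({x | y ∈ φ x} ∩ Sc)) := by
      have h1 : W ∩ closure V ⊆ closure (W ∩ V) := hW.inter_closure
      rw [hVW.symm.inter_eq, closure_empty, subset_empty_iff] at h1
      refine disjoint_left.mpr fun z hz hzC => ?_
      have : z ∈ W ∩ closure V := ⟨hCW hzC, hz⟩
      rw [h1] at this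
      exact this
    set T := Sc ∩ f ⁻¹' (closure V) with hT
    have hTclosed : IsClosed T := hSc.inter (isClosed_closure.preimage hfc)
    have hyT : y ∈ closure (f '' T) := by
      rw [mem_closure_iff]
      intro N hN hyN
      rw [mem_closure_iff] at hy
      obtain ⟨z, hzNV, hzS⟩ := hy (N ∩ V) (hN.inter hV) ⟨hyN, hyV rfl⟩
      obtain ⟨x, hxS, rfl⟩ := hzS
      exact ⟨f x, hzNV.1, ⟨x, ⟨hxS, subset_closure hzNV.2⟩, rfl⟩⟩
    have hyU : y ∈ ⋃ x ∈ T, φ x := by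
      have hcl := himage_closed T hTclosed
      have hsub : f '' T ⊆ ⋃ x ∈ T, φ x := by
        rintro z ⟨x, hx, rfl⟩
        exact mem_biUnion hx (hfφ x)
      exact hcl.closure_subset_iff.mpr hsub hyT
    simp only [mem_iUnion, exists_prop] at hyU
    obtain ⟨x, hxT, hyφx⟩ := hyU
    exact hclVC.le_bot ⟨hxT.2, ⟨x, ⟨⟨hyφx, hxT.1⟩, rfl⟩⟩⟩
  exact ⟨f, hfc, hfclosed, hfibers, hfφ⟩
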